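/- Let t > 0, let ν₁, …, ν_N be distinct real numbers, and let x, x' ∈ ℝ. Then, as a → 0⁺ with a restricted so that a(ν_j − x') is not a positive integer for any j, the kernel 𝐊_N^{ν,a}(t; x, x') = Σ_{j=1}^N ∫_ℝ p(t, x | ν_j) · p(t, y | 0) · Φ_ν^{ν_j,a}(x' + iy) dy converges to Σ_{j=1}^N ∫_ℝ p(t, x | ν_j) · p(t, y | 0) · Φ_ν^{ν_j}(x' + iy) dy, the equal-time correlation kernel of the noncolliding Brownian motion started from the configuration ν. -/

import Mathlib

open Filter Topology Finset MeasureTheory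

/-- Heat kernel: transition density of one-dimensional standard Brownian motion. -/
noncomputable def heatKernel (t y x : ℝ) : ℝ :=
  Real.exp (-(x - y) ^ 2 / (2 * t)) / Real.sqrt (2 * Real.pi * t)

section AuxLemmas
open Real

lemma norm_Gamma_le_Gamma_re {s : ℂ} (hs : 0 < s.re) :
    ‖Complex.Gamma s‖ ≤ Real.Gamma s.re := by
  rw [Complex.Gamma_eq_integral hs, Real.Gamma_eq_integral hs, Complex.GammaIntegral]
  refine norm_integral_le_of_norm_le (Real.GammaIntegral_convergent hs) ?_
  filter_upwards [ae_restrict_mem measurableSet_Ioi] with x hx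
  rw [norm_mul, Complex.norm_real, Real.norm_eq_abs,
    Complex.norm_cpow_eq_rpow_re_of_pos hx, abs_of_pos (Real.exp_pos _)]
  simp


lemma norm_cos_le_exp (z : ℂ) : ‖Complex.cos z‖ ≤ Real.exp ‖z‖ := by
  rw [Complex.cos]
  calc ‖(Complex.exp (z * Complex.I) + Complex.exp (-z * Complex.I)) / 2‖
      ≤ (‖Complex.exp (z * Complex.I)‖ + ‖Complex.exp (-z * Complex.I)‖) / 2 := by
        rw [norm_div]
        have : ‖(2:ℂ)‖ = 2 := by norm_num
        rw [this]
        gcongr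
        exact norm_add_le _ _
    _ ≤ (Real.exp ‖z‖ + Real.exp ‖z‖) / 2 := by
        gcongr <;> rw [Complex.norm_exp] <;> apply Real.exp_le_exp.2
        · simp only [Complex.mul_I_re]
          exact (neg_le_abs _).trans (Complex.abs_im_le_norm z)
        · simp only [Complex.neg_re, Complex.mul_I_re, Complex.neg_im, neg_neg]
          exact Complex.im_le_norm z
    _ = Real.exp ‖z‖ := by ring

lemma norm_sin_le (z : ℂ) : ‖Complex.sin z‖ ≤ ‖z‖ * Real.exp ‖z‖ := by
  have key := Convex.norm_image_sub_le_of_norm_fderiv_le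
    (f := Complex.sin) (s := Metric.closedBall (0:ℂ) ‖z‖) (C := Real.exp ‖z‖)
    (x := (0:ℂ)) (y := z)
    (fun w _ => (Complex.differentiable_sin w))
    (fun w hw => ?_) (convex_closedBall _ _) (Metric.mem_closedBall_self (norm_nonneg _))
    (by simpa using Metric.mem_closedBall_self (le_refl ‖z‖))
  · simpa [Complex.sin_zero, mul_comm] using key
  · rw [(Complex.hasDerivAt_sin w).hasFDerivAt.fderiv]
    rw [ContinuousLinearMap.norm_toSpanSingleton]
    exact (norm_cos_le_exp w).trans (Real.exp_le_exp.2 (by simpa using hw))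

lemma inv_Gamma_one_add_norm_le {s : ℂ} (hre : |s.re| ≤ 1/2) (hs : s ≠ 0) :
    ‖(Complex.Gamma (1 + s))⁻¹‖ ≤ Real.Gamma (1 - s.re) * Real.exp (π * ‖s‖) := by
  obtain ⟨hre1, hre2⟩ := abs_le.1 hre
  have hπ : (π : ℂ) ≠ 0 := Complex.ofReal_ne_zero.2 Real.pi_ne_zero
  have hsne : Complex.sin (π * s) ≠ 0 := by
    rw [Complex.sin_ne_zero_iff]
    intro k h
    rw [mul_comm ((k:ℂ)) _] at h
    have hk : s = (k : ℂ) := mul_left_cancel₀ hπ h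
    have h5 : |(k : ℝ)| ≤ 1/2 := by
      have := hre; rw [hk] at this; simpa using this
    have hk0 : k = 0 := by
      have h6 : ((|k| : ℤ) : ℝ) < 1 := by push_cast; linarith
      have h7 : |k| < 1 := by exact_mod_cast h6
      have := abs_lt.mp h7; omega
    exact hs (by rw [hk, hk0]; simp)
  have hG1 : Complex.Gamma (1 + s) ≠ 0 := by
    refine Complex.Gamma_ne_zero fun m hm => ?_
    have : (1 + s).re = -(m:ℂ).re := by rw [hm]; simp
    simp only [Complex.add_re, Complex.one_re, Complex.natCast_re] at this
    have : (1:ℝ) + s.re = -m := by simpa using this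
    have hm0 : (0:ℝ) ≤ m := Nat.cast_nonneg m
    linarith
  have hid : Complex.Gamma (1 + s) * Complex.Gamma (1 - s) =
      (π : ℂ) * s / Complex.sin ((π : ℂ) * s) := by
    have h1 := Complex.Gamma_mul_Gamma_one_sub (-s)
    have h2 : Complex.Gamma (1 - s) = -s * Complex.Gamma (-s) := by
      have h3 := Complex.Gamma_add_one (-s) (neg_ne_zero.2 hs)
      rw [← h3]; ring_nf
    rw [sub_neg_eq_add, show (π:ℂ) * -s = -((π:ℂ)*s) by ring, Complex.sin_neg] at h1
    rw [h2]
    rw [div_neg] at h1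
    rw [eq_div_iff hsne]
    have h1' : Complex.Gamma (-s) * Complex.Gamma (1 + s) * Complex.sin (π * s) = -π := by
      rw [h1, neg_mul, div_mul_cancel₀ _ hsne]
    linear_combination (-s) * h1'
  have hπs0 : (π:ℂ) * s ≠ 0 := mul_ne_zero hπ hs
  have h7 : Complex.Gamma (1 + s) * Complex.Gamma (1 - s) * Complex.sin ((π:ℂ) * s)
      = (π:ℂ) * s := by
    rw [hid]; field_simp
  have hinv : (Complex.Gamma (1 + s))⁻¹ =
      Complex.Gamma (1 - s) * Complex.sin ((π:ℂ) * s) / ((π:ℂ) * s) := by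
    field_simp [hG1]
    rw [mul_comm (π:ℂ) s] at h7
    linear_combination -h7
  rw [hinv]
  have hnorm : ‖Complex.Gamma (1 - s) * Complex.sin ((π:ℂ) * s) / ((π:ℂ) * s)‖
      = ‖Complex.Gamma (1 - s)‖ * ‖Complex.sin ((π:ℂ) * s)‖ / ‖(π:ℂ) * s‖ := by
    rw [norm_div, norm_mul]
  rw [hnorm]
  have hπs : (0:ℝ) < ‖(π:ℂ) * s‖ := by
    rw [norm_mul]
    exact mul_pos (norm_pos_iff.2 hπ) (norm_pos_iff.2 hs)
  have hb1 : ‖Complex.Gamma (1 - s)‖ ≤ Real.Gamma (1 - s.re) := by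
    have := norm_Gamma_le_Gamma_re (s := 1 - s) (by simp; linarith)
    simpa using this
  have hb2 : ‖Complex.sin ((π:ℂ) * s)‖ ≤ ‖(π:ℂ) * s‖ * Real.exp (π * ‖s‖) := by
    have := norm_sin_le ((π:ℂ) * s)
    have he : ‖(π:ℂ) * s‖ = π * ‖s‖ := by
      rw [norm_mul, Complex.norm_real, Real.norm_eq_abs, abs_of_pos Real.pi_pos]
    rwa [he] at this ⊢
  calc ‖Complex.Gamma (1 - s)‖ * ‖Complex.sin ((π:ℂ) * s)‖ / ‖(π:ℂ) * s‖
      ≤ Real.Gamma (1 - s.re) * (‖(π:ℂ) * s‖ * Real.exp (π * ‖s‖)) / ‖(π:ℂ) * s‖ := by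
        have hg : (0:ℝ) ≤ Real.Gamma (1 - s.re) := (Real.Gamma_pos_of_pos (by linarith)).le
        gcongr
    _ = Real.Gamma (1 - s.re) * Real.exp (π * ‖s‖) := by
        rw [mul_div_assoc, mul_comm (‖(π:ℂ) * s‖), mul_div_assoc, div_self hπs.ne', mul_one]


lemma integrable_exp_lin_gauss (c b : ℝ) (hb : 0 < b) :
    Integrable (fun y : ℝ => Real.exp (c * y - b * y ^ 2)) := by
  have key : ∀ y : ℝ, c * y - b * y ^ 2 = -b * (y - c / (2 * b)) ^ 2 + c ^ 2 / (4 * b) := by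
    intro y; field_simp; ring
  simp only [key, Real.exp_add]
  exact ((integrable_exp_neg_mul_sq hb).comp_sub_right (c / (2 * b))).mul_const _

lemma integrable_exp_abs_gauss (c b : ℝ) (hb : 0 < b) :
    Integrable (fun y : ℝ => Real.exp (c * |y| - b * y ^ 2)) := by
  refine Integrable.mono' ((integrable_exp_lin_gauss c b hb).add
    (integrable_exp_lin_gauss (-c) b hb)) ?_ ?_
  · apply Continuous.aestronglyMeasurable; continuity
  · filter_upwards with y
    rw [Real.norm_eq_abs, abs_of_pos (Real.exp_pos _)]
    rcases abs_cases y with ⟨h1, _⟩ | ⟨h1, _⟩ <;> rw [h1] <;>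
      [skip; rw [show c * -y = -c * y by ring]]
    · exact le_add_of_nonneg_right (Real.exp_pos _).le
    · exact le_add_of_nonneg_left (Real.exp_pos _).le

lemma exists_gamma_bound : ∃ C : ℝ, 1 ≤ C ∧ ∀ σ : ℝ, σ ∈ Set.Icc (1/2 : ℝ) 2 → Real.Gamma σ ≤ C := by
  have hcont : ContinuousOn Real.Gamma (Set.Icc (1/2 : ℝ) 2) := by
    intro σ hσ
    have hσ0 : (0:ℝ) < σ := lt_of_lt_of_le (by norm_num) hσ.1
    refine (Real.differentiableAt_Gamma fun m => ?_).continuousAt.continuousWithinAt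
    have : -(m:ℝ) ≤ 0 := by simp
    intro h; rw [h] at hσ0; linarith
  obtain ⟨σ0, hσ0, hmax⟩ := isCompact_Icc.exists_isMaxOn ⟨1, by norm_num⟩ hcont
  exact ⟨max (Real.Gamma σ0) 1, le_max_right _ _,
    fun σ hσ => (hmax hσ).trans (le_max_left _ _)⟩

lemma continuous_Gamma_comp {g : ℝ → ℂ} (hg : Continuous g) (h : ∀ y, 0 < (g y).re) :
    Continuous fun y => Complex.Gamma (g y) := by
  rw [continuous_iff_continuousAt]
  intro y
  refine (Complex.differentiableAt_Gamma _ fun m => ?_).continuousAt.comp hg.continuousAt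
  intro hc
  have h2 := h y
  rw [hc] at h2
  simp only [Complex.neg_re, Complex.natCast_re] at h2
  have : (0:ℝ) ≤ m := Nat.cast_nonneg m
  linarith

lemma heatKernel_nonneg (t y x : ℝ) : 0 ≤ heatKernel t y x := by
  unfold heatKernel; positivity

lemma continuous_heatKernel (t x : ℝ) : Continuous fun y => heatKernel t y x := by
  unfold heatKernel; fun_prop

end AuxLemmas

set_option maxHeartbeats 2000000

/-- Combinatorial limit `a → 0⁺` of the kernel `𝐊_N^{ν,a}(t; x, x')`:
it converges to the equal-time correlation kernel of the noncolliding Brownian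
motion started from the configuration `ν`. The parameter `a` is restricted so that
`a(ν_j − x')` is never a positive integer, keeping the integrand pole-free. -/
theorem kernel_combinatorial_limit (N : ℕ) (t : ℝ) (ht : 0 < t) (ν : Fin N → ℝ)
    (hν : Function.Injective ν) (x x' : ℝ) :
    Tendsto
      (fun a : ℝ => ∑ j : Fin N, ∫ y : ℝ,
        (heatKernel t x (ν j) : ℂ) * (heatKernel t y 0 : ℂ) *
          (Complex.Gamma (1 - (a : ℂ) * ((ν j : ℂ) - ((x' : ℂ) + Complex.I * (y : ℂ)))) *
            ∏ l ∈ univ.erase j,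
              Complex.Gamma ((a : ℂ) * ((ν l : ℂ) - (ν j : ℂ))) /
                Complex.Gamma ((a : ℂ) * ((ν l : ℂ) - ((x' : ℂ) + Complex.I * (y : ℂ))))))
      (𝓝[{a : ℝ | 0 < a ∧ ∀ j : Fin N, ∀ n : ℕ, a * (ν j - x') ≠ (n : ℝ) + 1}] 0)
      (𝓝 (∑ j : Fin N, ∫ y : ℝ,
        (heatKernel t x (ν j) : ℂ) * (heatKernel t y 0 : ℂ) *
          ∏ l ∈ univ.erase j,
            ((ν l : ℂ) - ((x' : ℂ) + Complex.I * (y : ℂ))) / ((ν l : ℂ) - (ν j : ℂ)))) := by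
  obtain ⟨C, hC1, hC⟩ := exists_gamma_bound
  set S : Set ℝ := {a : ℝ | 0 < a ∧ ∀ j : Fin N, ∀ n : ℕ, a * (ν j - x') ≠ (n : ℝ) + 1} with hSdef
  set L : Filter ℝ := 𝓝[S] 0 with hLdef
  set R : ℝ := 1 + |x'| + ∑ l : Fin N, |ν l| with hRdef
  have hsum_nonneg : 0 ≤ ∑ l : Fin N, |ν l| := Finset.sum_nonneg fun l _ => abs_nonneg _
  have hR1 : 1 ≤ R := by rw [hRdef]; linarith [abs_nonneg x']
  have hR0 : 0 < R := lt_of_lt_of_le one_pos hR1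
  have hmem : ∀ k : Fin N, |ν k| ≤ ∑ l : Fin N, |ν l| :=
    fun k => Finset.single_le_sum (fun l _ => abs_nonneg (ν l)) (Finset.mem_univ k)
  have hRb : ∀ k : Fin N, |ν k - x'| ≤ R := by
    intro k
    calc |ν k - x'| ≤ |ν k| + |x'| := abs_sub _ _
      _ ≤ R := by have := hmem k; rw [hRdef]; linarith
  set a0 : ℝ := 1 / (4 * R) with ha0def
  have ha0 : 0 < a0 := by positivity
  -- abbreviations
  set z : ℝ → ℂ := fun y => (x' : ℂ) + Complex.I * (y : ℂ) with hzdef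
  -- eventual membership facts
  have hev : ∀ᶠ a in L, a ∈ Set.Ioc (0:ℝ) a0 := by
    have h1 : ∀ᶠ a in L, a ∈ S := self_mem_nhdsWithin
    have h2 : ∀ᶠ a in L, |a| < a0 := by
      refine Filter.Eventually.filter_mono nhdsWithin_le_nhds ?_
      filter_upwards [Metric.ball_mem_nhds (0:ℝ) ha0] with a ha
      simpa [Real.dist_eq] using ha
    filter_upwards [h1, h2] with a ha1 ha2
    exact ⟨ha1.1, le_of_lt (lt_of_le_of_lt (le_abs_self a) ha2)⟩
  have hae : ∀ᵐ (y : ℝ), y ≠ 0 := by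
    have hset : {y : ℝ | ¬ y ≠ 0} = {(0:ℝ)} := by ext y; simp
    rw [MeasureTheory.ae_iff, hset]
    exact measure_singleton 0
  -- re/im computations
  have hre : ∀ (c yv : ℝ), ((c:ℂ) - z yv).re = c - x' := by
    intro c yv; simp [hzdef]
  have him : ∀ (c yv : ℝ), ((c:ℂ) - z yv).im = -yv := by
    intro c yv; simp [hzdef]
  have hnorm_le : ∀ (c yv : ℝ), |c - x'| ≤ R → ‖(c:ℂ) - z yv‖ ≤ R + |yv| := by
    intro c yv hc
    calc ‖(c:ℂ) - z yv‖ ≤ |((c:ℂ) - z yv).re| + |((c:ℂ) - z yv).im| :=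
          Complex.norm_le_abs_re_add_abs_im _
      _ = |c - x'| + |yv| := by rw [hre, him, abs_neg]
      _ ≤ R + |yv| := by linarith
  have hzne : ∀ (c yv : ℝ), yv ≠ 0 → (c:ℂ) - z yv ≠ 0 := by
    intro c yv hyv h0
    have := him c yv
    rw [h0] at this
    simp at this
    exact hyv this
  have hRb2 : ∀ k k' : Fin N, |ν k - ν k'| ≤ 2 * R := by
    intro k k'
    calc |ν k - ν k'| = |(ν k - x') - (ν k' - x')| := by ring_nf
      _ ≤ |ν k - x'| + |ν k' - x'| := abs_sub _ _
      _ ≤ 2 * R := by linarith [hRb k, hRb k']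
  have habs : ∀ a ∈ Set.Ioc (0:ℝ) a0, ∀ c : ℝ, |c| ≤ R → |a * c| ≤ 1/4 := by
    intro a ha c hc
    rw [abs_mul, abs_of_pos ha.1]
    calc a * |c| ≤ a0 * R := mul_le_mul ha.2 hc (abs_nonneg c) (le_of_lt ha0)
      _ = 1/4 := by rw [ha0def]; field_simp
  have habs2 : ∀ a ∈ Set.Ioc (0:ℝ) a0, ∀ k k' : Fin N, |a * (ν k - ν k')| ≤ 1/2 := by
    intro a ha k k'
    rw [abs_mul, abs_of_pos ha.1]
    calc a * |ν k - ν k'| ≤ a0 * (2 * R) :=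
          mul_le_mul ha.2 (hRb2 k k') (abs_nonneg _) (le_of_lt ha0)
      _ = 1/2 := by rw [ha0def]; field_simp; ring
  have hre2 : ∀ (aa c yv : ℝ), (1 - (aa:ℂ) * ((c:ℂ) - z yv)).re = 1 - aa * (c - x') := by
    intro aa c yv
    simp [hzdef, Complex.sub_re, Complex.mul_re]
    try ring
  have hre3 : ∀ (aa c yv : ℝ), ((aa:ℂ) * ((c:ℂ) - z yv)).re = aa * (c - x') := by
    intro aa c yv
    simp [hzdef, Complex.sub_re, Complex.mul_re]
  have hre4 : ∀ (aa c c' : ℝ), (1 + (aa:ℂ) * ((c:ℂ) - (c':ℂ))).re = 1 + aa * (c - c') := by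
    intro aa c c'
    simp [Complex.add_re, Complex.mul_re]
  have hzc : Continuous z := by
    rw [hzdef]
    exact continuous_const.add (continuous_const.mul Complex.continuous_ofReal)
  have hone_ne : ∀ m : ℕ, (1:ℂ) ≠ -(m:ℂ) := by
    intro m h
    have h2 := congrArg Complex.re h
    simp only [Complex.one_re, Complex.neg_re, Complex.natCast_re] at h2
    have : (0:ℝ) ≤ m := Nat.cast_nonneg m
    linarith
  refine tendsto_finset_sum _ (fun j _ => ?_)
  set H : ℝ → ℝ → ℂ := fun a y =>
    (heatKernel t x (ν j) : ℂ) * (heatKernel t y 0 : ℂ) *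
      (Complex.Gamma (1 - (a:ℂ) * ((ν j : ℂ) - z y)) *
        ∏ l ∈ univ.erase j,
          (((ν l : ℂ) - z y) / ((ν l : ℂ) - (ν j : ℂ)) *
            (Complex.Gamma (1 + (a:ℂ) * ((ν l : ℂ) - (ν j : ℂ))) *
              (Complex.Gamma (1 + (a:ℂ) * ((ν l : ℂ) - z y)))⁻¹))) with hHdef
  set bound : ℝ → ℝ := fun y =>
    heatKernel t x (ν j) * heatKernel t y 0 *
      (C * ((∏ l ∈ univ.erase j, (C * C / |ν l - ν j|)) *
        ((R + |y|) * Real.exp (Real.pi * (1 + |y|))) ^ (univ.erase j).card)) with hbddef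
  -- measurability
  have hHcont : ∀ a ∈ Set.Ioc (0:ℝ) a0, Continuous (H a) := by
    intro a ha
    rw [hHdef]
    refine (continuous_const.mul
      (Complex.continuous_ofReal.comp (continuous_heatKernel t 0))).mul (Continuous.mul ?_ ?_)
    · refine continuous_Gamma_comp
        (continuous_const.sub (continuous_const.mul (continuous_const.sub hzc))) ?_
      intro y
      rw [hre2 a (ν j) y]
      have h1 := habs a ha (ν j - x') (hRb j)
      linarith [le_abs_self (a * (ν j - x'))]
    · refine continuous_finset_prod _ (fun l _ => Continuous.mul ?_ (continuous_const.mul ?_))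
      · exact (continuous_const.sub hzc).div_const _
      · exact Complex.differentiable_one_div_Gamma.continuous.comp
          (continuous_const.add (continuous_const.mul (continuous_const.sub hzc)))
  -- domination
  have hHbound : ∀ a ∈ Set.Ioc (0:ℝ) a0, ∀ y : ℝ, y ≠ 0 → ‖H a y‖ ≤ bound y := by
    intro a ha y hy
    have hb0 : (0:ℝ) ≤ C := le_trans zero_le_one hC1
    have hk1 : ‖(heatKernel t x (ν j) : ℂ)‖ = heatKernel t x (ν j) := by
      rw [Complex.norm_real, Real.norm_eq_abs, abs_of_nonneg (heatKernel_nonneg _ _ _)]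
    have hk2 : ‖(heatKernel t y 0 : ℂ)‖ = heatKernel t y 0 := by
      rw [Complex.norm_real, Real.norm_eq_abs, abs_of_nonneg (heatKernel_nonneg _ _ _)]
    have hΓ1 : ‖Complex.Gamma (1 - (a:ℂ) * ((ν j:ℂ) - z y))‖ ≤ C := by
      have hb := abs_le.mp (habs a ha (ν j - x') (hRb j))
      have hrepos : 0 < (1 - (a:ℂ) * ((ν j:ℂ) - z y)).re := by
        rw [hre2]; linarith
      refine (norm_Gamma_le_Gamma_re hrepos).trans (hC _ ?_)
      rw [hre2]
      constructor <;> simp <;> linarith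
    have hterm : ∀ l ∈ univ.erase j,
        ‖((ν l : ℂ) - z y) / ((ν l : ℂ) - (ν j : ℂ)) *
          (Complex.Gamma (1 + (a:ℂ) * ((ν l : ℂ) - (ν j : ℂ))) *
            (Complex.Gamma (1 + (a:ℂ) * ((ν l : ℂ) - z y)))⁻¹)‖ ≤
          (C * C / |ν l - ν j|) * ((R + |y|) * Real.exp (Real.pi * (1 + |y|))) := by
      intro l hl
      have hlj : l ≠ j := Finset.ne_of_mem_erase hl
      have hdpos : 0 < |ν l - ν j| := by
        rw [abs_pos, sub_ne_zero]
        exact fun h => hlj (hν h)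
      have h1 : ‖((ν l:ℂ) - z y) / ((ν l:ℂ) - (ν j:ℂ))‖ ≤ (R + |y|) / |ν l - ν j| := by
        rw [norm_div]
        have hd : ‖(ν l:ℂ) - (ν j:ℂ)‖ = |ν l - ν j| := by
          rw [show (ν l:ℂ) - (ν j:ℂ) = ((ν l - ν j : ℝ):ℂ) by push_cast; ring,
            Complex.norm_real, Real.norm_eq_abs]
        rw [hd]
        exact (div_le_div_iff_of_pos_right hdpos).2 (hnorm_le (ν l) y (hRb l))
      have h2 : ‖Complex.Gamma (1 + (a:ℂ) * ((ν l:ℂ) - (ν j:ℂ)))‖ ≤ C := by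
        have hb := abs_le.mp (habs2 a ha l j)
        refine (norm_Gamma_le_Gamma_re (by rw [hre4]; linarith)).trans (hC _ ?_)
        rw [hre4]
        constructor <;> linarith
      have h3 : ‖(Complex.Gamma (1 + (a:ℂ) * ((ν l:ℂ) - z y)))⁻¹‖ ≤
          C * Real.exp (Real.pi * (1 + |y|)) := by
        have hsre : ((a:ℂ) * ((ν l:ℂ) - z y)).re = a * (ν l - x') := hre3 a (ν l) y
        have hb := abs_le.mp (habs a ha (ν l - x') (hRb l))
        have hsne : (a:ℂ) * ((ν l:ℂ) - z y) ≠ 0 :=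
          mul_ne_zero (Complex.ofReal_ne_zero.2 ha.1.ne') (hzne (ν l) y hy)
        have habs' : |((a:ℂ) * ((ν l:ℂ) - z y)).re| ≤ 1/2 := by
          rw [hsre]; rw [abs_le]; constructor <;> linarith
        refine (inv_Gamma_one_add_norm_le habs' hsne).trans ?_
        have hg : Real.Gamma (1 - ((a:ℂ) * ((ν l:ℂ) - z y)).re) ≤ C := by
          refine hC _ ?_
          rw [hsre]
          constructor <;> simp <;> linarith
        have hnorm2 : ‖(a:ℂ) * ((ν l:ℂ) - z y)‖ ≤ 1 + |y| := by
          rw [norm_mul, Complex.norm_real, Real.norm_eq_abs, abs_of_pos ha.1]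
          calc a * ‖(ν l:ℂ) - z y‖ ≤ a0 * (R + |y|) :=
                mul_le_mul ha.2 (hnorm_le (ν l) y (hRb l)) (norm_nonneg _) ha0.le
            _ ≤ 1 + |y| := by
                rw [ha0def, div_mul_eq_mul_div, one_mul, div_le_iff₀ (by linarith : (0:ℝ) < 4*R)]
                nlinarith [abs_nonneg y]
        refine mul_le_mul hg (Real.exp_le_exp.2 ?_) (Real.exp_pos _).le hb0
        exact mul_le_mul_of_nonneg_left hnorm2 Real.pi_pos.le
      calc ‖((ν l : ℂ) - z y) / ((ν l : ℂ) - (ν j : ℂ)) *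
          (Complex.Gamma (1 + (a:ℂ) * ((ν l : ℂ) - (ν j : ℂ))) *
            (Complex.Gamma (1 + (a:ℂ) * ((ν l : ℂ) - z y)))⁻¹)‖
          = ‖((ν l : ℂ) - z y) / ((ν l : ℂ) - (ν j : ℂ))‖ *
            (‖Complex.Gamma (1 + (a:ℂ) * ((ν l : ℂ) - (ν j : ℂ)))‖ *
              ‖(Complex.Gamma (1 + (a:ℂ) * ((ν l : ℂ) - z y)))⁻¹‖) := by
            rw [norm_mul, norm_mul]
        _ ≤ ((R + |y|) / |ν l - ν j|) * (C * (C * Real.exp (Real.pi * (1 + |y|)))) := by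
            refine mul_le_mul h1 (mul_le_mul h2 h3 (norm_nonneg _) hb0) ?_ ?_
            · positivity
            · positivity
        _ = (C * C / |ν l - ν j|) * ((R + |y|) * Real.exp (Real.pi * (1 + |y|))) := by
            ring
    have hprod : ‖∏ l ∈ univ.erase j,
        (((ν l : ℂ) - z y) / ((ν l : ℂ) - (ν j : ℂ)) *
          (Complex.Gamma (1 + (a:ℂ) * ((ν l : ℂ) - (ν j : ℂ))) *
            (Complex.Gamma (1 + (a:ℂ) * ((ν l : ℂ) - z y)))⁻¹))‖ ≤
        (∏ l ∈ univ.erase j, (C * C / |ν l - ν j|)) *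
          ((R + |y|) * Real.exp (Real.pi * (1 + |y|))) ^ (univ.erase j).card := by
      calc ‖∏ l ∈ univ.erase j, _‖ ≤ ∏ l ∈ univ.erase j,
            ‖(((ν l : ℂ) - z y) / ((ν l : ℂ) - (ν j : ℂ)) *
              (Complex.Gamma (1 + (a:ℂ) * ((ν l : ℂ) - (ν j : ℂ))) *
                (Complex.Gamma (1 + (a:ℂ) * ((ν l : ℂ) - z y)))⁻¹))‖ := norm_prod_le _ _
        _ ≤ ∏ l ∈ univ.erase j, ((C * C / |ν l - ν j|) *
              ((R + |y|) * Real.exp (Real.pi * (1 + |y|)))) :=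
            Finset.prod_le_prod (fun l _ => norm_nonneg _) hterm
        _ = (∏ l ∈ univ.erase j, (C * C / |ν l - ν j|)) *
              ((R + |y|) * Real.exp (Real.pi * (1 + |y|))) ^ (univ.erase j).card := by
            rw [Finset.prod_mul_distrib, Finset.prod_const]
    rw [hHdef, hbddef]
    simp only
    rw [norm_mul, norm_mul, hk1, hk2]
    refine mul_le_mul_of_nonneg_left ?_
      (mul_nonneg (heatKernel_nonneg _ _ _) (heatKernel_nonneg _ _ _))
    calc ‖Complex.Gamma (1 - (a:ℂ) * ((ν j:ℂ) - z y)) * ∏ l ∈ univ.erase j,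
          (((ν l : ℂ) - z y) / ((ν l : ℂ) - (ν j : ℂ)) *
            (Complex.Gamma (1 + (a:ℂ) * ((ν l : ℂ) - (ν j : ℂ))) *
              (Complex.Gamma (1 + (a:ℂ) * ((ν l : ℂ) - z y)))⁻¹))‖
        = ‖Complex.Gamma (1 - (a:ℂ) * ((ν j:ℂ) - z y))‖ * ‖∏ l ∈ univ.erase j,
          (((ν l : ℂ) - z y) / ((ν l : ℂ) - (ν j : ℂ)) *
            (Complex.Gamma (1 + (a:ℂ) * ((ν l : ℂ) - (ν j : ℂ))) *
              (Complex.Gamma (1 + (a:ℂ) * ((ν l : ℂ) - z y)))⁻¹))‖ := norm_mul _ _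
      _ ≤ C * ((∏ l ∈ univ.erase j, (C * C / |ν l - ν j|)) *
            ((R + |y|) * Real.exp (Real.pi * (1 + |y|))) ^ (univ.erase j).card) :=
          mul_le_mul hΓ1 hprod (norm_nonneg _) hb0
  -- integrability of the bound
  have hbound_int : Integrable bound := by
    have hb0 : (0:ℝ) ≤ C := le_trans zero_le_one hC1
    set n : ℕ := (univ.erase j).card with hn
    set Pc : ℝ := ∏ l ∈ univ.erase j, (C * C / |ν l - ν j|) with hPc
    have hPc0 : 0 ≤ Pc := Finset.prod_nonneg (fun l _ => by positivity)
    set cc : ℝ := (n:ℝ) * (1 + Real.pi) with hcc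
    set b : ℝ := 1 / (2*t) with hb
    have hbpos : 0 < b := by rw [hb]; positivity
    set K : ℝ := heatKernel t x (ν j) * (1 / Real.sqrt (2*Real.pi*t)) *
      (C * Pc * Real.exp ((n:ℝ) * (R + Real.pi))) with hK
    refine Integrable.mono' ((integrable_exp_abs_gauss cc b hbpos).const_mul K) ?_ ?_
    · apply Continuous.aestronglyMeasurable
      rw [hbddef]
      refine Continuous.mul (continuous_const.mul (continuous_heatKernel t 0)) ?_
      refine continuous_const.mul (continuous_const.mul (Continuous.pow ?_ n))
      exact Continuous.mul (continuous_const.add continuous_abs)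
        (Real.continuous_exp.comp (continuous_const.mul (continuous_const.add continuous_abs)))
    · filter_upwards with y
      have hbnn : 0 ≤ bound y := by
        rw [hbddef]
        refine mul_nonneg (mul_nonneg (heatKernel_nonneg _ _ _) (heatKernel_nonneg _ _ _)) ?_
        refine mul_nonneg hb0 (mul_nonneg hPc0 (pow_nonneg ?_ _))
        positivity
      rw [Real.norm_eq_abs, abs_of_nonneg hbnn]
      have hE : ((R + |y|) * Real.exp (Real.pi * (1 + |y|))) ^ n ≤
          Real.exp ((n:ℝ) * (R + Real.pi)) * Real.exp (cc * |y|) := by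
        have h2 : R + |y| ≤ Real.exp (R + |y|) := by
          linarith [Real.add_one_le_exp (R + |y|)]
        have h1 : (R + |y|) * Real.exp (Real.pi * (1 + |y|)) ≤
            Real.exp ((R + Real.pi) + (1 + Real.pi) * |y|) := by
          calc (R + |y|) * Real.exp (Real.pi * (1 + |y|))
              ≤ Real.exp (R + |y|) * Real.exp (Real.pi * (1 + |y|)) :=
                mul_le_mul_of_nonneg_right h2 (Real.exp_pos _).le
            _ = Real.exp ((R + |y|) + Real.pi * (1 + |y|)) := (Real.exp_add _ _).symm
            _ = Real.exp ((R + Real.pi) + (1 + Real.pi) * |y|) := by ring_nf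
        calc ((R + |y|) * Real.exp (Real.pi * (1 + |y|))) ^ n
            ≤ (Real.exp ((R + Real.pi) + (1 + Real.pi) * |y|)) ^ n := by
              refine pow_le_pow_left₀ ?_ h1 n
              positivity
          _ = Real.exp ((n:ℝ) * ((R + Real.pi) + (1 + Real.pi) * |y|)) := by
              rw [← Real.exp_nat_mul]
          _ = Real.exp ((n:ℝ) * (R + Real.pi)) * Real.exp (cc * |y|) := by
              rw [← Real.exp_add]
              congr 1
              rw [hcc]; ring
      have hk2y : heatKernel t y 0 = Real.exp (-(b * y^2)) * (1 / Real.sqrt (2*Real.pi*t)) := by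
        unfold heatKernel
        rw [hb]
        rw [div_eq_mul_one_div]
        congr 2
        field_simp
        ring
      calc bound y = heatKernel t x (ν j) * heatKernel t y 0 *
            (C * (Pc * ((R + |y|) * Real.exp (Real.pi * (1 + |y|))) ^ n)) := by rw [hbddef]
        _ ≤ heatKernel t x (ν j) * heatKernel t y 0 *
            (C * (Pc * (Real.exp ((n:ℝ) * (R + Real.pi)) * Real.exp (cc * |y|)))) := by
            refine mul_le_mul_of_nonneg_left ?_
              (mul_nonneg (heatKernel_nonneg _ _ _) (heatKernel_nonneg _ _ _))
            exact mul_le_mul_of_nonneg_left (mul_le_mul_of_nonneg_left hE hPc0) hb0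
        _ = K * Real.exp (cc * |y| - b * y ^ 2) := by
            rw [show cc * |y| - b * y ^ 2 = cc * |y| + (-(b * y^2)) by ring, Real.exp_add,
              hK, hk2y]
            ring
  -- pointwise limit
  have hHtend : ∀ y : ℝ, y ≠ 0 → Tendsto (fun a => H a y) L
      (𝓝 ((heatKernel t x (ν j) : ℂ) * (heatKernel t y 0 : ℂ) *
        ∏ l ∈ univ.erase j, (((ν l : ℂ) - z y) / ((ν l : ℂ) - (ν j : ℂ))))) := by
    intro y hy
    have hg1 : ContinuousAt Complex.Gamma 1 :=
      (Complex.differentiableAt_Gamma 1 hone_ne).continuousAt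
    have t1 : Tendsto (fun a : ℝ => Complex.Gamma (1 - (a:ℂ) * ((ν j : ℂ) - z y)))
        (𝓝 0) (𝓝 1) := by
      have hc : Continuous (fun a : ℝ => 1 - (a:ℂ) * ((ν j : ℂ) - z y)) :=
        continuous_const.sub (Complex.continuous_ofReal.mul continuous_const)
      have h0 : Tendsto (fun a : ℝ => 1 - (a:ℂ) * ((ν j : ℂ) - z y)) (𝓝 0) (𝓝 1) := by
        have := hc.tendsto 0
        simpa using this
      have := hg1.tendsto.comp h0
      rwa [Complex.Gamma_one] at this
    have t2 : ∀ l : Fin N, Tendsto (fun a : ℝ =>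
        Complex.Gamma (1 + (a:ℂ) * ((ν l : ℂ) - (ν j : ℂ)))) (𝓝 0) (𝓝 1) := by
      intro l
      have hc : Continuous (fun a : ℝ => 1 + (a:ℂ) * ((ν l : ℂ) - (ν j : ℂ))) :=
        continuous_const.add (Complex.continuous_ofReal.mul continuous_const)
      have h0 : Tendsto (fun a : ℝ => 1 + (a:ℂ) * ((ν l : ℂ) - (ν j : ℂ))) (𝓝 0) (𝓝 1) := by
        have := hc.tendsto 0
        simpa using this
      have := hg1.tendsto.comp h0
      rwa [Complex.Gamma_one] at this
    have t3 : ∀ l : Fin N, Tendsto (fun a : ℝ =>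
        (Complex.Gamma (1 + (a:ℂ) * ((ν l : ℂ) - z y)))⁻¹) (𝓝 0) (𝓝 1) := by
      intro l
      have hc : Continuous (fun a : ℝ => 1 + (a:ℂ) * ((ν l : ℂ) - z y)) :=
        continuous_const.add (Complex.continuous_ofReal.mul continuous_const)
      have h0 : Tendsto (fun a : ℝ => 1 + (a:ℂ) * ((ν l : ℂ) - z y)) (𝓝 0) (𝓝 1) := by
        have := hc.tendsto 0
        simpa using this
      have := (Complex.differentiable_one_div_Gamma.continuous.tendsto 1).comp h0
      rw [Complex.Gamma_one, inv_one] at this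
      exact this
    have tprod : Tendsto (fun a : ℝ => ∏ l ∈ univ.erase j,
        (((ν l : ℂ) - z y) / ((ν l : ℂ) - (ν j : ℂ)) *
          (Complex.Gamma (1 + (a:ℂ) * ((ν l : ℂ) - (ν j : ℂ))) *
            (Complex.Gamma (1 + (a:ℂ) * ((ν l : ℂ) - z y)))⁻¹))) (𝓝 0)
        (𝓝 (∏ l ∈ univ.erase j, (((ν l : ℂ) - z y) / ((ν l : ℂ) - (ν j : ℂ))))) := by
      have : ∀ l ∈ univ.erase j, Tendsto (fun a : ℝ =>
          ((ν l : ℂ) - z y) / ((ν l : ℂ) - (ν j : ℂ)) *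
            (Complex.Gamma (1 + (a:ℂ) * ((ν l : ℂ) - (ν j : ℂ))) *
              (Complex.Gamma (1 + (a:ℂ) * ((ν l : ℂ) - z y)))⁻¹)) (𝓝 0)
          (𝓝 (((ν l : ℂ) - z y) / ((ν l : ℂ) - (ν j : ℂ)))) := by
        intro l _
        have := ((t2 l).mul (t3 l)).const_mul (((ν l : ℂ) - z y) / ((ν l : ℂ) - (ν j : ℂ)))
        simpa using this
      have := tendsto_finset_prod (univ.erase j) this
      exact this
    have tall : Tendsto (fun a : ℝ => H a y) (𝓝 0)
        (𝓝 ((heatKernel t x (ν j) : ℂ) * (heatKernel t y 0 : ℂ) *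
          ∏ l ∈ univ.erase j, (((ν l : ℂ) - z y) / ((ν l : ℂ) - (ν j : ℂ))))) := by
      rw [hHdef]
      have := (t1.mul tprod).const_mul ((heatKernel t x (ν j) : ℂ) * (heatKernel t y 0 : ℂ))
      simpa using this
    exact tall.mono_left nhdsWithin_le_nhds
  -- equality with the original kernel
  have hFH : ∀ a ∈ S, ∀ y : ℝ, y ≠ 0 →
      (heatKernel t x (ν j) : ℂ) * (heatKernel t y 0 : ℂ) *
        (Complex.Gamma (1 - (a : ℂ) * ((ν j : ℂ) - z y)) *
          ∏ l ∈ univ.erase j,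
            Complex.Gamma ((a : ℂ) * ((ν l : ℂ) - (ν j : ℂ))) /
              Complex.Gamma ((a : ℂ) * ((ν l : ℂ) - z y))) = H a y := by
    intro a haS y hy
    rw [hHdef]
    congr 1
    congr 1
    refine Finset.prod_congr rfl (fun l hl => ?_)
    have hlj : l ≠ j := Finset.ne_of_mem_erase hl
    have hune : (ν l : ℂ) - (ν j : ℂ) ≠ 0 := by
      rw [sub_ne_zero]
      exact_mod_cast fun h => hlj (hν (by exact_mod_cast h))
    have hvne : (ν l : ℂ) - z y ≠ 0 := hzne (ν l) y hy
    have hane : (a : ℂ) ≠ 0 := Complex.ofReal_ne_zero.2 haS.1.ne'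
    have hau : (a:ℂ) * ((ν l : ℂ) - (ν j : ℂ)) ≠ 0 := mul_ne_zero hane hune
    have hav : (a:ℂ) * ((ν l : ℂ) - z y) ≠ 0 := mul_ne_zero hane hvne
    have e1 : Complex.Gamma ((a:ℂ) * ((ν l : ℂ) - (ν j : ℂ)) + 1) =
        (a:ℂ) * ((ν l : ℂ) - (ν j : ℂ)) * Complex.Gamma ((a:ℂ) * ((ν l : ℂ) - (ν j : ℂ))) :=
      Complex.Gamma_add_one _ hau
    have e2 : Complex.Gamma ((a:ℂ) * ((ν l : ℂ) - z y) + 1) =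
        (a:ℂ) * ((ν l : ℂ) - z y) * Complex.Gamma ((a:ℂ) * ((ν l : ℂ) - z y)) :=
      Complex.Gamma_add_one _ hav
    have hG2 : Complex.Gamma (1 + (a:ℂ) * ((ν l : ℂ) - z y)) ≠ 0 := by
      refine Complex.Gamma_ne_zero fun m => ?_
      intro hc
      have h3 := congrArg Complex.im hc
      simp only [Complex.add_im, Complex.one_im, Complex.neg_im, Complex.natCast_im,
        Complex.im_ofReal_mul, neg_zero, zero_add] at h3
      rw [him (ν l) y] at h3
      exact hy (by
        have := mul_eq_zero.1 h3
        rcases this with h | h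
        · exact absurd h haS.1.ne'
        · linarith [neg_eq_zero.1 h])
    have hGav : Complex.Gamma ((a:ℂ) * ((ν l : ℂ) - z y)) ≠ 0 := by
      intro h0
      rw [add_comm] at hG2
      rw [e2, h0, mul_zero] at hG2
      exact hG2 rfl
    rw [add_comm 1 ((a:ℂ) * ((ν l : ℂ) - (ν j : ℂ))), add_comm 1 ((a:ℂ) * ((ν l : ℂ) - z y)),
      e1, e2]
    field_simp
  have key : Tendsto (fun a => ∫ y : ℝ, H a y) L
      (𝓝 (∫ y : ℝ, (heatKernel t x (ν j) : ℂ) * (heatKernel t y 0 : ℂ) *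
        ∏ l ∈ univ.erase j, (((ν l : ℂ) - z y) / ((ν l : ℂ) - (ν j : ℂ))))) := by
    refine MeasureTheory.tendsto_integral_filter_of_dominated_convergence bound ?_ ?_ hbound_int ?_
    · filter_upwards [hev] with a ha
      exact (hHcont a ha).aestronglyMeasurable
    · filter_upwards [hev] with a ha
      filter_upwards [hae] with y hy
      exact hHbound a ha y hy
    · filter_upwards [hae] with y hy
      exact hHtend y hy
  refine Tendsto.congr' ?_ key
  have hevS : ∀ᶠ a in L, a ∈ S := self_mem_nhdsWithin
  filter_upwards [hevS] with a haS
  refine MeasureTheory.integral_congr_ae ?_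
  filter_upwards [hae] with y hy
  exact (hFH a haS y hy).symm
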